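/- Let h : 𝔹² → 𝔹² be defined by h(x,y) = (x cos t − y sin t, x sin t + y cos t) with t = tan(π(x² + y²)/2). Fix y ∈ (−1,1) and set a = √(1 − y²). Then the path γ : [0,a) → 𝔹², γ(s) = h(s,y), is divergent in 𝔹² (it eventually leaves every compact subset of 𝔹² as s → a) and has infinite length: its total variation on [0,a) equals ∞. -/

import Mathlib

open Set Real Filter Topology

/-- The open unit disk `𝔹² = {(x,y) : x² + y² < 1}` (with the Euclidean metric). -/
def unitDisk : Set (ℝ × ℝ) := {p | p.1 ^ 2 + p.2 ^ 2 < 1}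

/-- The twisting map `h(x,y) = (x cos t − y sin t, x sin t + y cos t)`,
`t = tan(π(x² + y²)/2)`. -/
noncomputable def twist (p : ℝ × ℝ) : ℝ × ℝ :=
  (p.1 * Real.cos (Real.tan (π * (p.1 ^ 2 + p.2 ^ 2) / 2)) -
      p.2 * Real.sin (Real.tan (π * (p.1 ^ 2 + p.2 ^ 2) / 2)),
    p.1 * Real.sin (Real.tan (π * (p.1 ^ 2 + p.2 ^ 2) / 2)) +
      p.2 * Real.cos (Real.tan (π * (p.1 ^ 2 + p.2 ^ 2) / 2)))

/-- for fixed `y ∈ (−1,1)` and `a = √(1 − y²)`, the path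
`γ(s) = h(s, y)`, `s ∈ [0, a)`, stays in `𝔹²`, is divergent in `𝔹²` as `s → a`,
and has infinite length (total variation `∞` on `[0,a)`). -/
theorem twist_of_chord_is_divergent_and_has_infinite_length
    (y : ℝ) (hy : y ∈ Set.Ioo (-1 : ℝ) 1) :
    (∀ s ∈ Set.Ico (0 : ℝ) (Real.sqrt (1 - y ^ 2)),
      twist (s, y) ∈ unitDisk) ∧
    (∀ K : Set (ℝ × ℝ), IsCompact K → K ⊆ unitDisk →
      ∀ᶠ s in 𝓝[<] (Real.sqrt (1 - y ^ 2)), twist (s, y) ∉ K) ∧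
    eVariationOn (fun s : ℝ => twist (s, y))
      (Set.Ico (0 : ℝ) (Real.sqrt (1 - y ^ 2))) = ⊤ := by
  obtain ⟨hy1, hy2⟩ := hy
  have hy2' : y ^ 2 < 1 := by nlinarith
  have ha2 : 0 < 1 - y ^ 2 := by linarith
  have hπ := Real.pi_pos
  set a := Real.sqrt (1 - y ^ 2) with ha_def
  have ha : 0 < a := Real.sqrt_pos.mpr ha2
  have ha_sq : a ^ 2 = 1 - y ^ 2 := Real.sq_sqrt ha2.le
  have hnorm : ∀ s : ℝ, (twist (s, y)).1 ^ 2 + (twist (s, y)).2 ^ 2 = s ^ 2 + y ^ 2 := by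
    intro s
    simp only [twist]
    linear_combination (s ^ 2 + y ^ 2) *
      Real.sin_sq_add_cos_sq (Real.tan (π * (s ^ 2 + y ^ 2) / 2))
  refine ⟨?_, ?_, ?_⟩
  · -- the path stays in the disk
    intro s hs
    have h1 : s ^ 2 < a ^ 2 := by nlinarith [hs.1, hs.2]
    show (twist (s, y)).1 ^ 2 + (twist (s, y)).2 ^ 2 < 1
    rw [hnorm]
    nlinarith [ha_sq]
  · -- divergence
    intro K hK hKsub
    rcases K.eq_empty_or_nonempty with rfl | hne
    · simp
    have hcont : ContinuousOn (fun p : ℝ × ℝ => p.1 ^ 2 + p.2 ^ 2) K :=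
      (Continuous.continuousOn (by continuity))
    obtain ⟨p0, hp0, hmax⟩ := hK.exists_isMaxOn hne hcont
    have hc : p0.1 ^ 2 + p0.2 ^ 2 < 1 := hKsub hp0
    have h1 : a ^ 2 + y ^ 2 = 1 := by rw [ha_sq]; ring
    have htend : Tendsto (fun s : ℝ => s ^ 2 + y ^ 2) (𝓝[<] a) (𝓝 1) := by
      have h2 : Tendsto (fun s : ℝ => s ^ 2 + y ^ 2) (𝓝 a) (𝓝 (a ^ 2 + y ^ 2)) :=
        Continuous.tendsto (by continuity) a
      rw [h1] at h2
      exact h2.mono_left nhdsWithin_le_nhds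
    have hev : ∀ᶠ s in 𝓝[<] a, p0.1 ^ 2 + p0.2 ^ 2 < s ^ 2 + y ^ 2 :=
      htend.eventually (eventually_gt_nhds hc)
    filter_upwards [hev] with s hs hmem
    have := hmax hmem
    simp only [Set.mem_setOf_eq] at this
    have h3 := hnorm s
    nlinarith [this, h3, hs]
  · -- infinite variation
    set g : ℝ → ℝ := fun v => Real.sqrt (2 * Real.arctan v / π - y ^ 2) with hg_def
    set v0 := Real.tan (π * y ^ 2 / 2) with hv0_def
    have hyarc : Real.arctan v0 = π * y ^ 2 / 2 := by
      apply Real.arctan_tan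
      · nlinarith [sq_nonneg y]
      · nlinarith
    have hgmem : ∀ v, v0 < v → g v ∈ Set.Ico 0 a ∧ 0 < g v ∧
        Real.tan (π * ((g v) ^ 2 + y ^ 2) / 2) = v := by
      intro v hv
      have harc : π * y ^ 2 / 2 < Real.arctan v := by
        rw [← hyarc]; exact Real.arctan_strictMono hv
      have harc2 : Real.arctan v < π / 2 := Real.arctan_lt_pi_div_two v
      have hw : 0 < 2 * Real.arctan v / π - y ^ 2 := by
        rw [sub_pos, lt_div_iff₀ hπ]; linarith
      have hw2 : 2 * Real.arctan v / π - y ^ 2 < 1 - y ^ 2 := by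
        have : 2 * Real.arctan v / π < 1 := by rw [div_lt_one hπ]; linarith
        linarith
      have hsq : (g v) ^ 2 = 2 * Real.arctan v / π - y ^ 2 := Real.sq_sqrt hw.le
      have hgpos : 0 < g v := Real.sqrt_pos.mpr hw
      have hglt : g v < a := Real.sqrt_lt_sqrt hw.le hw2
      refine ⟨⟨hgpos.le, hglt⟩, hgpos, ?_⟩
      have heq : π * ((g v) ^ 2 + y ^ 2) / 2 = Real.arctan v := by
        rw [hsq]; field_simp; ring
      rw [heq, Real.tan_arctan]
    obtain ⟨k, hk⟩ := exists_nat_gt (v0 / (2 * π))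
    have hkv : v0 < 2 * (k : ℝ) * π := by
      rw [div_lt_iff₀ (by linarith)] at hk; linarith
    set u : ℕ → ℝ := fun i => g ((2 * (k : ℝ) + i) * π) with hu_def
    have hvi : ∀ i : ℕ, v0 < (2 * (k : ℝ) + i) * π := by
      intro i
      have hi : (0 : ℝ) ≤ i := Nat.cast_nonneg i
      nlinarith
    have humem : ∀ i, u i ∈ Set.Ico 0 a := fun i => (hgmem _ (hvi i)).1
    have hupos : ∀ i, 0 < u i := fun i => (hgmem _ (hvi i)).2.1
    have humono : Monotone u := by
      intro i j hij
      simp only [hu_def, hg_def]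
      apply Real.sqrt_le_sqrt
      have hcij : (i : ℝ) ≤ j := Nat.cast_le.mpr hij
      have harcle : Real.arctan ((2 * (k : ℝ) + i) * π) ≤
          Real.arctan ((2 * (k : ℝ) + j) * π) :=
        Real.arctan_strictMono.monotone (by nlinarith)
      have : 2 * Real.arctan ((2 * (k : ℝ) + i) * π) / π ≤
          2 * Real.arctan ((2 * (k : ℝ) + j) * π) / π := by
        gcongr
      linarith
    have hcossin : ∀ i : ℕ, Real.cos ((2 * (k : ℝ) + i) * π) = (-1) ^ i ∧
        Real.sin ((2 * (k : ℝ) + i) * π) = 0 := by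
      intro i
      have h1 : (2 * (k : ℝ) + i) * π = ((2 * k + i : ℕ) : ℝ) * π := by push_cast; ring
      rw [h1]
      constructor
      · have h2 := Real.cos_nat_mul_pi_sub 0 (2 * k + i)
        rw [sub_zero, Real.cos_zero, mul_one] at h2
        rw [h2, pow_add, pow_mul]
        norm_num
      · exact Real.sin_nat_mul_pi _
    have hfst : ∀ i : ℕ, (twist (u i, y)).1 = (-1) ^ i * u i := by
      intro i
      have htan := (hgmem _ (hvi i)).2.2
      show u i * Real.cos (Real.tan (π * ((u i) ^ 2 + y ^ 2) / 2)) -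
          y * Real.sin (Real.tan (π * ((u i) ^ 2 + y ^ 2) / 2)) = (-1) ^ i * u i
      rw [htan, (hcossin i).1, (hcossin i).2]
      ring
    have hsum : ∀ n : ℕ, (n : ENNReal) * ENNReal.ofReal (u 0) ≤
        eVariationOn (fun s : ℝ => twist (s, y)) (Set.Ico 0 a) := by
      intro n
      have hle := eVariationOn.sum_le (f := fun s : ℝ => twist (s, y)) (n := n) humono humem
      refine le_trans ?_ hle
      have hterm : ∀ i ∈ Finset.range n, ENNReal.ofReal (u 0) ≤
          edist (twist (u (i + 1), y)) (twist (u i, y)) := by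
        intro i _
        have h1 := hupos i
        have h2 := hupos (i + 1)
        have h3 : u 0 ≤ u i := humono (Nat.zero_le i)
        have h4 : u 0 ≤ u (i + 1) := humono (Nat.zero_le _)
        have habs : |(twist (u (i + 1), y)).1 - (twist (u i, y)).1| = u (i + 1) + u i := by
          rw [hfst, hfst]
          have heq : (-1 : ℝ) ^ (i + 1) * u (i + 1) - (-1) ^ i * u i =
              (-1) ^ i * (-(u (i + 1)) - u i) := by
            rw [pow_succ]; ring
          rw [heq, abs_mul, abs_pow, abs_neg, abs_one, one_pow, one_mul,
            abs_of_nonpos (by linarith)]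
          ring
        calc ENNReal.ofReal (u 0)
            ≤ ENNReal.ofReal (|(twist (u (i + 1), y)).1 - (twist (u i, y)).1|) := by
              apply ENNReal.ofReal_le_ofReal
              rw [habs]; linarith
          _ = edist (twist (u (i + 1), y)).1 (twist (u i, y)).1 := by
              rw [edist_dist, Real.dist_eq]
          _ ≤ edist (twist (u (i + 1), y)) (twist (u i, y)) := by
              rw [Prod.edist_eq]; exact le_max_left _ _
      calc (n : ENNReal) * ENNReal.ofReal (u 0)
          = ∑ _i ∈ Finset.range n, ENNReal.ofReal (u 0) := by
            rw [Finset.sum_const, Finset.card_range, nsmul_eq_mul]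
        _ ≤ ∑ i ∈ Finset.range n, edist (twist (u (i + 1), y)) (twist (u i, y)) :=
            Finset.sum_le_sum hterm
        _ ≤ _ := le_rfl
    rw [eq_top_iff]
    calc (⊤ : ENNReal) = ⊤ * ENNReal.ofReal (u 0) :=
          (ENNReal.top_mul ((ENNReal.ofReal_pos.mpr (hupos 0)).ne')).symm
      _ = (⨆ n : ℕ, (n : ENNReal)) * ENNReal.ofReal (u 0) := by rw [ENNReal.iSup_natCast]
      _ = ⨆ n : ℕ, (n : ENNReal) * ENNReal.ofReal (u 0) := ENNReal.iSup_mul _ _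
      _ ≤ _ := iSup_le hsum
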